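/- Let T > 0 and let g : [0,T] → ℝ be absolutely continuous with g(t) = g(0) + ∫_0^t g'(s) ds and g' ∈ L²(0,T). For n ∈ ℕ, n ≥ 1, set τ = T/n and let Q_n(g) = [g]_n = (g_0,…,g_n) with g_k = (1/τ)∫_{t_{k−1}}^{t_k} g(t) dt for k = 1,…,n and g_0 = g(0). Then (i) ‖[g]_n‖²_{w¹₂} ≤ ‖g‖²_{W¹₂(0,T)} + ∫_0^τ g'(s)² ds; and (ii) for every ε > 0 and R > ε, if ‖g‖_{W¹₂(0,T)} ≤ R − ε then there exists N such that ‖Q_n(g)‖_{w¹₂} ≤ R for all n ≥ N. -/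

import Mathlib

open MeasureTheory

/-- The Steklov averages `Q_n(g) = (g_0, …, g_n)` of `g`, with `g_0 = g(0)`. -/
noncomputable def steklovAvg (T : ℝ) (n : ℕ) (g : ℝ → ℝ) (k : ℕ) : ℝ :=
  if k = 0 then g 0
  else (1 / (T / n)) * ∫ t in ((k : ℝ) - 1) * (T / n)..(k : ℝ) * (T / n), g t

/-- The square of the discrete Sobolev norm `‖[g]_n‖²_{w¹₂}`. -/
noncomputable def discNormSq (T : ℝ) (n : ℕ) (G : ℕ → ℝ) : ℝ :=
  ∑ k ∈ Finset.Icc 1 n, (T / n) * (G k) ^ 2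
    + ∑ k ∈ Finset.Icc 1 n, (T / n) * ((G k - G (k - 1)) / (T / n)) ^ 2

/-- Cauchy–Schwarz on an interval: `(∫ f)² ≤ (b-a) ∫ f²`. -/
lemma cs_interval (a b : ℝ) (hab : a ≤ b) (f : ℝ → ℝ)
    (hf : IntervalIntegrable f volume a b)
    (hf2 : IntervalIntegrable (fun x => f x ^ 2) volume a b) :
    (∫ x in a..b, f x) ^ 2 ≤ (b - a) * ∫ x in a..b, f x ^ 2 := by
  rcases eq_or_lt_of_le hab with h | h
  · simp [← h]
  have hb : (0:ℝ) < b - a := by linarith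
  set S := ∫ x in a..b, f x with hS
  set I := ∫ x in a..b, f x ^ 2 with hI
  set c := S / (b - a) with hc
  have h0 : 0 ≤ ∫ x in a..b, (f x - c) ^ 2 :=
    intervalIntegral.integral_nonneg hab (fun x _ => sq_nonneg _)
  have hexp : ∫ x in a..b, (f x - c) ^ 2 = I - 2 * c * S + (b - a) * c ^ 2 := by
    have e : ∀ x : ℝ, (f x - c) ^ 2 = (f x ^ 2 - (2 * c) * f x) + c ^ 2 := by
      intro x; ring
    simp_rw [e]
    rw [intervalIntegral.integral_add (hf2.sub (hf.const_mul _)) intervalIntegrable_const,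
        intervalIntegral.integral_sub hf2 (hf.const_mul _),
        intervalIntegral.integral_const_mul, intervalIntegral.integral_const, smul_eq_mul]
  rw [hexp] at h0
  have hcs : c * (b - a) = S := div_mul_cancel₀ _ (ne_of_gt hb)
  nlinarith [mul_nonneg hb.le h0, sq_nonneg (c * (b - a) - S)]

lemma sum_Icc_one_eq_range (f : ℕ → ℝ) (n : ℕ) :
    ∑ k ∈ Finset.Icc 1 n, f k = ∑ i ∈ Finset.range n, f (i + 1) := by
  rw [← Finset.Ico_add_one_right_eq_Icc, Finset.sum_Ico_eq_sum_range]
  simp [Nat.add_comm]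

lemma sum_Icc_two_telescope (f : ℕ → ℝ) (n : ℕ) (hn : 1 ≤ n) :
    ∑ k ∈ Finset.Icc 2 n, (f k - f (k - 1)) = f n - f 1 := by
  rw [← Finset.Ico_add_one_right_eq_Icc, Finset.sum_Ico_eq_sum_range]
  have h1 : n + 1 - 2 = n - 1 := by omega
  rw [h1]
  have h2 : ∀ i, f (2 + i) - f (2 + i - 1) = f (i + 1 + 1) - f (i + 1) := by
    intro i; congr 1 <;> congr 1 <;> omega
  rw [Finset.sum_congr rfl (fun i _ => h2 i), Finset.sum_range_sub (fun i => f (i + 1))]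
  congr 2
  omega

set_option maxHeartbeats 2000000 in
/-- Part (i) as a standalone lemma. -/
lemma steklov_bound (T : ℝ) (hT : 0 < T) (g g' : ℝ → ℝ)
    (hint : IntegrableOn g' (Set.Icc (0 : ℝ) T))
    (hac : ∀ t ∈ Set.Icc (0 : ℝ) T, g t = g 0 + ∫ s in (0 : ℝ)..t, g' s)
    (hL2 : MemLp g' 2 (volume.restrict (Set.Ioc (0 : ℝ) T)))
    (n : ℕ) (hn : 1 ≤ n) :
    discNormSq T n (steklovAvg T n g)
      ≤ ((∫ t in (0 : ℝ)..T, (g t) ^ 2) + ∫ t in (0 : ℝ)..T, (g' t) ^ 2)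
        + ∫ s in (0 : ℝ)..(T / n), (g' s) ^ 2 := by
  rw [discNormSq]
  have hn0 : (0:ℝ) < (n:ℝ) := by exact_mod_cast hn
  set τ := T / (n:ℝ) with hτdef
  have hτ : 0 < τ := div_pos hT hn0
  have hnτ : (n:ℝ) * τ = T := by
    rw [hτdef]; field_simp [hn0.ne']
  clear_value τ
  have hτT : τ ≤ T := by
    rw [hτdef]
    apply div_le_self hT.le
    exact_mod_cast hn
  -- membership helper
  have hmem : ∀ x : ℝ, 0 ≤ x → x ≤ (n:ℝ) → x * τ ∈ Set.Icc (0:ℝ) T := by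
    intro x hx hxn
    refine ⟨mul_nonneg hx hτ.le, ?_⟩
    calc x * τ ≤ (n:ℝ) * τ := by nlinarith
    _ = T := hnτ
  -- interval integrability of g' and g'^2 on subintervals of [0,T]
  have hg'ii : ∀ x y, x ∈ Set.Icc (0:ℝ) T → y ∈ Set.Icc (0:ℝ) T →
      IntervalIntegrable g' volume x y := fun x y hx hy =>
    (hint.mono_set (Set.uIcc_subset_Icc hx hy)).intervalIntegrable
  have hq : IntegrableOn (fun t => g' t ^ 2) (Set.Icc (0:ℝ) T) := by
    rw [integrableOn_Icc_iff_integrableOn_Ioc]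
    exact hL2.integrable_sq
  have hqii : ∀ x y, x ∈ Set.Icc (0:ℝ) T → y ∈ Set.Icc (0:ℝ) T →
      IntervalIntegrable (fun t => g' t ^ 2) volume x y := fun x y hx hy =>
    (hq.mono_set (Set.uIcc_subset_Icc hx hy)).intervalIntegrable
  -- continuity of g on [0,T]
  have hGc : ContinuousOn (fun t => g 0 + ∫ s in (0:ℝ)..t, g' s) (Set.Icc 0 T) := by
    apply continuousOn_const.add
    have := intervalIntegral.continuousOn_primitive_interval
      (a := (0:ℝ)) (b := T) (f := g') (μ := volume) (by rwa [Set.uIcc_of_le hT.le])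
    rwa [Set.uIcc_of_le hT.le] at this
  have hgc : ContinuousOn g (Set.Icc (0:ℝ) T) := hGc.congr (fun t ht => hac t ht)
  have hgii : ∀ x y, x ∈ Set.Icc (0:ℝ) T → y ∈ Set.Icc (0:ℝ) T →
      IntervalIntegrable g volume x y := fun x y hx hy =>
    (hgc.mono (Set.uIcc_subset_Icc hx hy)).intervalIntegrable
  have hg2ii : ∀ x y, x ∈ Set.Icc (0:ℝ) T → y ∈ Set.Icc (0:ℝ) T →
      IntervalIntegrable (fun t => g t ^ 2) volume x y := fun x y hx hy =>
    ((hgc.mono (Set.uIcc_subset_Icc hx hy)).pow 2).intervalIntegrable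
  -- the primitive F of g'^2
  set F : ℝ → ℝ := fun x => ∫ s in (0:ℝ)..x, g' s ^ 2 with hFdef
  have hFd : ∀ x y, x ∈ Set.Icc (0:ℝ) T → y ∈ Set.Icc (0:ℝ) T →
      F y - F x = ∫ s in x..y, g' s ^ 2 := by
    intro x y hx hy
    have := intervalIntegral.integral_add_adjacent_intervals
      (hqii 0 x ⟨le_refl 0, hT.le⟩ hx) (hqii x y hx hy)
    simp only [hFdef]
    linarith [this]
  have hFmono : ∀ x y, x ∈ Set.Icc (0:ℝ) T → y ∈ Set.Icc (0:ℝ) T → x ≤ y →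
      F x ≤ F y := by
    intro x y hx hy hxy
    have h1 := hFd x y hx hy
    have h2 : 0 ≤ ∫ s in x..y, g' s ^ 2 :=
      intervalIntegral.integral_nonneg hxy (fun s _ => sq_nonneg _)
    linarith
  have hF0 : F 0 = 0 := intervalIntegral.integral_same
  have hFnn : ∀ x, x ∈ Set.Icc (0:ℝ) T → 0 ≤ F x := by
    intro x hx
    have := hFmono 0 x ⟨le_refl 0, hT.le⟩ hx hx.1
    linarith [hF0]
  have hFc : ContinuousOn F (Set.Icc (0:ℝ) T) := by
    have := intervalIntegral.continuousOn_primitive_interval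
      (a := (0:ℝ)) (b := T) (f := fun t => g' t ^ 2) (μ := volume)
      (by rwa [Set.uIcc_of_le hT.le])
    rwa [Set.uIcc_of_le hT.le] at this
  have hFii : ∀ x y, x ∈ Set.Icc (0:ℝ) T → y ∈ Set.Icc (0:ℝ) T →
      IntervalIntegrable F volume x y := fun x y hx hy =>
    (hFc.mono (Set.uIcc_subset_Icc hx hy)).intervalIntegrable
  -- key pointwise estimate
  have hpt : ∀ x y, x ∈ Set.Icc (0:ℝ) T → y ∈ Set.Icc (0:ℝ) T → x ≤ y →
      (g y - g x) ^ 2 ≤ (y - x) * (F y - F x) := by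
    intro x y hx hy hxy
    have hgy := hac y hy
    have hgx := hac x hx
    have hsub : g y - g x = ∫ s in x..y, g' s := by
      rw [hgy, hgx]
      have := intervalIntegral.integral_add_adjacent_intervals
        (hg'ii 0 x ⟨le_refl 0, hT.le⟩ hx) (hg'ii x y hx hy)
      linarith
    rw [hsub, hFd x y hx hy]
    exact cs_interval x y hxy g' (hg'ii x y hx hy) (hqii x y hx hy)
  ------------------------------------------------------------------
  -- Sum 1 : the L² part
  ------------------------------------------------------------------
  have key1 : ∀ k ∈ Finset.Icc 1 n, τ * (steklovAvg T n g k) ^ 2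
      ≤ ∫ t in (((k:ℝ) - 1) * τ)..((k:ℝ) * τ), g t ^ 2 := by
    intro k hk
    obtain ⟨hk1, hkn⟩ := Finset.mem_Icc.1 hk
    have hkne : k ≠ 0 := by omega
    have hk1R : (1:ℝ) ≤ (k:ℝ) := by exact_mod_cast hk1
    have hknR : (k:ℝ) ≤ (n:ℝ) := by exact_mod_cast hkn
    have hm1 : ((k:ℝ) - 1) * τ ∈ Set.Icc (0:ℝ) T := hmem _ (by linarith) (by linarith)
    have hm2 : (k:ℝ) * τ ∈ Set.Icc (0:ℝ) T := hmem _ (by linarith) hknR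
    have hle : ((k:ℝ) - 1) * τ ≤ (k:ℝ) * τ := by nlinarith
    have hcs := cs_interval _ _ hle g (hgii _ _ hm1 hm2) (hg2ii _ _ hm1 hm2)
    have hfac : (k:ℝ) * τ - ((k:ℝ) - 1) * τ = τ := by ring
    rw [hfac] at hcs
    rw [steklovAvg, if_neg hkne]
    set S := ∫ t in (((k:ℝ) - 1) * τ)..((k:ℝ) * τ), g t with hSdef
    set I := ∫ t in (((k:ℝ) - 1) * τ)..((k:ℝ) * τ), g t ^ 2 with hIdef
    have halg : τ * (1 / τ * S) ^ 2 = S ^ 2 / τ := by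
      field_simp
    rw [← hτdef, halg, div_le_iff₀ hτ]
    nlinarith
  have sum1 : ∑ k ∈ Finset.Icc 1 n, τ * (steklovAvg T n g k) ^ 2
      ≤ ∫ t in (0:ℝ)..T, g t ^ 2 := by
    have step1 : ∑ k ∈ Finset.Icc 1 n, τ * (steklovAvg T n g k) ^ 2
        ≤ ∑ k ∈ Finset.Icc 1 n, ∫ t in (((k:ℝ) - 1) * τ)..((k:ℝ) * τ), g t ^ 2 :=
      Finset.sum_le_sum key1
    have step2 : ∑ k ∈ Finset.Icc 1 n,
          (∫ t in (((k:ℝ) - 1) * τ)..((k:ℝ) * τ), g t ^ 2)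
        = ∑ i ∈ Finset.range n,
          ∫ t in (((i:ℕ):ℝ) * τ)..((((i+1):ℕ):ℝ) * τ), g t ^ 2 := by
      rw [sum_Icc_one_eq_range (fun k => ∫ t in (((k:ℝ) - 1) * τ)..((k:ℝ) * τ), g t ^ 2) n]
      apply Finset.sum_congr rfl
      intro i _
      congr 1 <;> push_cast <;> ring
    have step3 : ∑ i ∈ Finset.range n,
          (∫ t in (((i:ℕ):ℝ) * τ)..((((i+1):ℕ):ℝ) * τ), g t ^ 2)
        = ∫ t in (0:ℝ)..T, g t ^ 2 := by
      have hadj := intervalIntegral.sum_integral_adjacent_intervals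
        (a := fun i : ℕ => (i:ℝ) * τ) (f := fun t => g t ^ 2) (μ := volume) (n := n)
        (fun k hk => by
          have h1 : ((k:ℝ)) ≤ (n:ℝ) := by exact_mod_cast hk.le
          have h2 : (((k+1):ℕ):ℝ) ≤ (n:ℝ) := by exact_mod_cast hk
          exact hg2ii _ _ (hmem _ (Nat.cast_nonneg k) h1)
            (hmem _ (Nat.cast_nonneg (k+1)) h2))
      rw [hadj]
      norm_num [hnτ]
    linarith [step1, step2.symm ▸ step1, step2, step3]
  ------------------------------------------------------------------
  -- Sum 2 : the difference part
  ------------------------------------------------------------------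
  set Φ : ℕ → ℝ := fun k => (1/τ) * ∫ t in (((k:ℝ) - 1) * τ)..((k:ℝ) * τ), F t with hΦdef
  -- k = 1 term
  have key3 : τ * ((steklovAvg T n g 1 - steklovAvg T n g 0) / τ) ^ 2 ≤ F τ := by
    have hτmem : τ ∈ Set.Icc (0:ℝ) T := ⟨hτ.le, hτT⟩
    have h0mem : (0:ℝ) ∈ Set.Icc (0:ℝ) T := ⟨le_refl 0, hT.le⟩
    have e0 : steklovAvg T n g 0 = g 0 := by rw [steklovAvg, if_pos rfl]
    have e1 : steklovAvg T n g 1 = (1/τ) * ∫ t in (0:ℝ)..τ, g t := by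
      rw [steklovAvg, if_neg one_ne_zero, hτdef]
      norm_num
    have hFτ : 0 ≤ F τ := hFnn τ hτmem
    -- pointwise bound for (g t - g 0)^2 on [0, τ]
    have hptc : ∀ t ∈ Set.Icc (0:ℝ) τ, (g t - g 0) ^ 2 ≤ τ * F τ := by
      intro t ht
      have htmem : t ∈ Set.Icc (0:ℝ) T := ⟨ht.1, le_trans ht.2 hτT⟩
      have h1 := hpt 0 t h0mem htmem ht.1
      rw [hF0] at h1
      have h2 : 0 ≤ F t := hFnn t htmem
      have h3 : F t ≤ F τ := hFmono t τ htmem hτmem ht.2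
      nlinarith [ht.1, ht.2]
    have hcont : ContinuousOn (fun t => g t - g 0) (Set.uIcc (0:ℝ) τ) :=
      (hgc.mono (Set.uIcc_subset_Icc h0mem hτmem)).sub continuousOn_const
    have hΔcs := cs_interval 0 τ hτ.le (fun t => g t - g 0)
      hcont.intervalIntegrable (hcont.pow 2).intervalIntegrable
    have hΔmono : (∫ t in (0:ℝ)..τ, (g t - g 0) ^ 2) ≤ ∫ _t in (0:ℝ)..τ, τ * F τ := by
      apply intervalIntegral.integral_mono_on hτ.le (hcont.pow 2).intervalIntegrable
        intervalIntegrable_const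
      exact hptc
    rw [intervalIntegral.integral_const, smul_eq_mul, sub_zero] at hΔmono
    set Δ := ∫ t in (0:ℝ)..τ, (g t - g 0) with hΔdef
    have hΔ2 : Δ ^ 2 ≤ τ * (τ * (τ * F τ)) := by
      have h9 := hΔcs
      rw [sub_zero] at h9
      nlinarith
    have eD : steklovAvg T n g 1 - steklovAvg T n g 0 = (1/τ) * Δ := by
      rw [e0, e1, hΔdef]
      rw [intervalIntegral.integral_sub (hgii 0 τ h0mem hτmem) intervalIntegrable_const,
        intervalIntegral.integral_const, smul_eq_mul, sub_zero]
      field_simp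
      try ring
    rw [eD]
    have hlhs : τ * ((1/τ) * Δ / τ) ^ 2 = Δ ^ 2 / τ ^ 3 := by
      field_simp
    rw [hlhs, div_le_iff₀ (pow_pos hτ 3)]
    nlinarith
  -- k ≥ 2 terms
  have key2 : ∀ k ∈ Finset.Icc 2 n,
      τ * ((steklovAvg T n g k - steklovAvg T n g (k - 1)) / τ) ^ 2 ≤ Φ k - Φ (k - 1) := by
    intro k hk
    obtain ⟨hk2, hkn⟩ := Finset.mem_Icc.1 hk
    have hk2R : (2:ℝ) ≤ (k:ℝ) := by exact_mod_cast hk2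
    have hknR : (k:ℝ) ≤ (n:ℝ) := by exact_mod_cast hkn
    set A := ((k:ℝ) - 1 - 1) * τ with hAdef
    set B := ((k:ℝ) - 1) * τ with hBdef
    set C := (k:ℝ) * τ with hCdef
    clear_value A B C
    have hAmem : A ∈ Set.Icc (0:ℝ) T := by
      rw [hAdef]; exact hmem _ (by linarith) (by linarith)
    have hBmem : B ∈ Set.Icc (0:ℝ) T := by
      rw [hBdef]; exact hmem _ (by linarith) (by linarith)
    have hCmem : C ∈ Set.Icc (0:ℝ) T := by
      rw [hCdef]; exact hmem _ (by linarith) hknR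
    have hAB : A ≤ B := by rw [hAdef, hBdef]; nlinarith
    have hBC : B ≤ C := by rw [hBdef, hCdef]; nlinarith
    have hABτ : A + τ = B := by rw [hAdef, hBdef]; ring
    have hBCτ : B + τ = C := by rw [hBdef, hCdef]; ring
    -- unfold the two averages
    have e1 : steklovAvg T n g k = (1/τ) * ∫ t in B..C, g t := by
      rw [steklovAvg, if_neg (by omega : ¬ k = 0), hBdef, hCdef, hτdef]
    have e2 : steklovAvg T n g (k - 1) = (1/τ) * ∫ t in A..B, g t := by
      rw [steklovAvg, if_neg (by omega : ¬ k - 1 = 0)]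
      have hc : (((k - 1 : ℕ)):ℝ) = (k:ℝ) - 1 := by
        push_cast [Nat.cast_sub (by omega : 1 ≤ k)]; ring
      rw [hc, hAdef, hBdef, hτdef]
    -- shift of the integral
    have hshiftc : ContinuousOn (fun t => g (t + τ)) (Set.uIcc A B) := by
      apply hgc.comp ((continuous_id.add continuous_const).continuousOn)
      intro t ht
      rw [Set.uIcc_of_le hAB] at ht
      constructor
      · have := hAmem.1; show 0 ≤ t + τ; linarith [ht.1]
      · have : t + τ ≤ B + τ := by linarith [ht.2]
        rw [hBCτ] at this
        exact le_trans this hCmem.2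
    have eshift : (∫ t in B..C, g t) = ∫ t in A..B, g (t + τ) := by
      rw [intervalIntegral.integral_comp_add_right g τ, hABτ, hBCτ]
    have hhc : ContinuousOn (fun t => g (t + τ) - g t) (Set.uIcc A B) :=
      hshiftc.sub (hgc.mono (Set.uIcc_subset_Icc hAmem hBmem))
    have eD : steklovAvg T n g k - steklovAvg T n g (k - 1)
        = (1/τ) * ∫ t in A..B, (g (t + τ) - g t) := by
      rw [e1, e2, eshift, ← mul_sub,
        intervalIntegral.integral_sub hshiftc.intervalIntegrable
          (hgii A B hAmem hBmem)]
    -- Cauchy-Schwarz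
    set Δ := ∫ t in A..B, (g (t + τ) - g t) with hΔdef
    clear_value Δ
    have hΔcs := cs_interval A B hAB (fun t => g (t + τ) - g t)
      hhc.intervalIntegrable (hhc.pow 2).intervalIntegrable
    beta_reduce at hΔcs
    rw [← hΔdef] at hΔcs
    -- pointwise bound and integration
    have hptc : ∀ t ∈ Set.Icc A B, (g (t + τ) - g t) ^ 2 ≤ τ * (F (t + τ) - F t) := by
      intro t ht
      have htmem : t ∈ Set.Icc (0:ℝ) T := ⟨le_trans hAmem.1 ht.1, le_trans ht.2 hBmem.2⟩
      have htτmem : t + τ ∈ Set.Icc (0:ℝ) T := by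
        constructor
        · linarith [htmem.1, hτ.le]
        · have : t + τ ≤ B + τ := by linarith [ht.2]
          rw [hBCτ] at this
          exact le_trans this hCmem.2
      have h1 := hpt t (t + τ) htmem htτmem (by linarith)
      have h2 : t + τ - t = τ := by ring
      rw [h2] at h1
      exact h1
    have hFshiftc : ContinuousOn (fun t => τ * (F (t + τ) - F t)) (Set.uIcc A B) := by
      apply continuousOn_const.mul
      apply ContinuousOn.sub
      · apply hFc.comp ((continuous_id.add continuous_const).continuousOn)
        intro t ht
        rw [Set.uIcc_of_le hAB] at ht
        constructor
        · have := hAmem.1; show 0 ≤ t + τ; linarith [ht.1]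
        · have : t + τ ≤ B + τ := by linarith [ht.2]
          rw [hBCτ] at this
          exact le_trans this hCmem.2
      · exact hFc.mono (Set.uIcc_subset_Icc hAmem hBmem)
    have hmono2 : (∫ t in A..B, (g (t + τ) - g t) ^ 2)
        ≤ ∫ t in A..B, τ * (F (t + τ) - F t) := by
      apply intervalIntegral.integral_mono_on hAB (hhc.pow 2).intervalIntegrable
        hFshiftc.intervalIntegrable hptc
    have hFshift_ii : IntervalIntegrable (fun t => F (t + τ)) volume A B := by
      have : ContinuousOn (fun t => F (t + τ)) (Set.uIcc A B) := by
        apply hFc.comp ((continuous_id.add continuous_const).continuousOn)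
        intro t ht
        rw [Set.uIcc_of_le hAB] at ht
        constructor
        · have := hAmem.1; show 0 ≤ t + τ; linarith [ht.1]
        · have : t + τ ≤ B + τ := by linarith [ht.2]
          rw [hBCτ] at this
          exact le_trans this hCmem.2
      exact this.intervalIntegrable
    have hval : (∫ t in A..B, τ * (F (t + τ) - F t))
        = τ * ((∫ t in B..C, F t) - ∫ t in A..B, F t) := by
      rw [intervalIntegral.integral_const_mul,
        intervalIntegral.integral_sub hFshift_ii (hFii A B hAmem hBmem),
        intervalIntegral.integral_comp_add_right F τ, hABτ, hBCτ]
    -- put everything together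
    have hΔ2 : Δ ^ 2 ≤ τ * (τ * ((∫ t in B..C, F t) - ∫ t in A..B, F t)) := by
      have hBA : B - A = τ := by rw [hAdef, hBdef]; ring
      rw [hBA] at hΔcs
      calc Δ ^ 2 ≤ τ * ∫ t in A..B, (g (t + τ) - g t) ^ 2 := hΔcs
      _ ≤ τ * ∫ t in A..B, τ * (F (t + τ) - F t) := by
          apply mul_le_mul_of_nonneg_left hmono2 hτ.le
      _ = τ * (τ * ((∫ t in B..C, F t) - ∫ t in A..B, F t)) := by rw [hval]
    have eΦk : Φ k = (1/τ) * ∫ t in B..C, F t := by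
      simp only [hΦdef, hBdef, hCdef]
    have hc : (((k - 1 : ℕ)):ℝ) = (k:ℝ) - 1 := by
      push_cast [Nat.cast_sub (by omega : 1 ≤ k)]; ring
    have eΦk1 : Φ (k - 1) = (1/τ) * ∫ t in A..B, F t := by
      simp only [hΦdef, hAdef, hBdef, hc]
    rw [eD, eΦk, eΦk1]
    have hlhs : τ * ((1/τ) * Δ / τ) ^ 2 = Δ ^ 2 / τ ^ 3 := by
      field_simp
    rw [hlhs]
    rw [div_le_iff₀ (pow_pos hτ 3)]
    have hexp : ((1/τ) * ∫ t in B..C, F t) - (1/τ) * ∫ t in A..B, F t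
        = (1/τ) * ((∫ t in B..C, F t) - ∫ t in A..B, F t) := by ring
    rw [hexp]
    have : (1/τ) * ((∫ t in B..C, F t) - ∫ t in A..B, F t) * τ ^ 3
        = τ * (τ * ((∫ t in B..C, F t) - ∫ t in A..B, F t)) := by
      field_simp
    rw [this]
    exact hΔ2
  -- telescoping bound for Φ
  have hΦ1 : 0 ≤ Φ 1 := by
    have : Φ 1 = (1/τ) * ∫ t in (0:ℝ)..τ, F t := by
      rw [hΦdef]; norm_num
    rw [this]
    apply mul_nonneg (le_of_lt (by exact one_div_pos.mpr hτ))
    apply intervalIntegral.integral_nonneg hτ.le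
    intro x hx
    exact hFnn x ⟨hx.1, le_trans hx.2 hτT⟩
  have hΦn : Φ n ≤ F T := by
    have h1n : (1:ℝ) ≤ (n:ℝ) := by exact_mod_cast hn
    have hmem1 : ((n:ℝ) - 1) * τ ∈ Set.Icc (0:ℝ) T := hmem _ (by linarith) (by linarith)
    have hmem2 : (n:ℝ) * τ ∈ Set.Icc (0:ℝ) T := hmem _ (Nat.cast_nonneg n) (le_refl _)
    have hle : ((n:ℝ) - 1) * τ ≤ (n:ℝ) * τ := by nlinarith
    have hb : (∫ t in (((n:ℝ) - 1) * τ)..((n:ℝ) * τ), F t)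
        ≤ ∫ _t in (((n:ℝ) - 1) * τ)..((n:ℝ) * τ), F T := by
      apply intervalIntegral.integral_mono_on hle (hFii _ _ hmem1 hmem2)
        intervalIntegrable_const
      intro x hx
      exact hFmono x T ⟨le_trans hmem1.1 hx.1, le_trans hx.2 hmem2.2⟩
        ⟨hT.le, le_refl T⟩ (le_trans hx.2 hmem2.2)
    rw [intervalIntegral.integral_const, smul_eq_mul] at hb
    have hfac : ((n:ℝ) * τ - ((n:ℝ) - 1) * τ) = τ := by ring
    rw [hfac] at hb
    have eΦn : Φ n = (1/τ) * ∫ t in (((n:ℝ) - 1) * τ)..((n:ℝ) * τ), F t := by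
      simp only [hΦdef]
    rw [eΦn]
    have hFT : 0 ≤ F T := hFnn T ⟨hT.le, le_refl T⟩
    calc (1/τ) * ∫ t in (((n:ℝ) - 1) * τ)..((n:ℝ) * τ), F t
        ≤ (1/τ) * (τ * F T) := by
          apply mul_le_mul_of_nonneg_left hb (le_of_lt (one_div_pos.mpr hτ))
    _ = F T := by field_simp
  -- assemble sum 2
  have split : Finset.Icc 1 n = insert 1 (Finset.Icc 2 n) := by
    ext k; simp only [Finset.mem_Icc, Finset.mem_insert]; omega
  have h1notin : (1:ℕ) ∉ Finset.Icc 2 n := by simp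
  have sum2 : ∑ k ∈ Finset.Icc 1 n,
        τ * ((steklovAvg T n g k - steklovAvg T n g (k - 1)) / τ) ^ 2
      ≤ F τ + F T := by
    rw [split, Finset.sum_insert h1notin]
    have hle2 : ∑ k ∈ Finset.Icc 2 n,
          τ * ((steklovAvg T n g k - steklovAvg T n g (k - 1)) / τ) ^ 2
        ≤ ∑ k ∈ Finset.Icc 2 n, (Φ k - Φ (k - 1)) := Finset.sum_le_sum key2
    rw [sum_Icc_two_telescope Φ n hn] at hle2
    have e11 : (1:ℕ) - 1 = 0 := rfl
    rw [e11]
    linarith [key3, hle2, hΦ1, hΦn]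
  -- conclusion of part (i)
  have hFT : F T = ∫ t in (0:ℝ)..T, g' t ^ 2 := rfl
  have hFτ : F τ = ∫ s in (0:ℝ)..τ, g' s ^ 2 := rfl
  rw [← hFT, ← hFτ]
  linarith [sum1, sum2]

theorem steklov_map_discrete_norm_bound (T : ℝ) (hT : 0 < T)
    (g g' : ℝ → ℝ)
    (hint : IntegrableOn g' (Set.Icc (0 : ℝ) T))
    (hac : ∀ t ∈ Set.Icc (0 : ℝ) T, g t = g 0 + ∫ s in (0 : ℝ)..t, g' s)
    (hL2 : MemLp g' 2 (volume.restrict (Set.Ioc (0 : ℝ) T))) :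
    (∀ n : ℕ, 1 ≤ n →
      discNormSq T n (steklovAvg T n g)
        ≤ ((∫ t in (0 : ℝ)..T, (g t) ^ 2) + ∫ t in (0 : ℝ)..T, (g' t) ^ 2)
          + ∫ s in (0 : ℝ)..(T / n), (g' s) ^ 2) ∧
    (∀ ε R : ℝ, 0 < ε → ε < R →
      Real.sqrt ((∫ t in (0 : ℝ)..T, (g t) ^ 2) + ∫ t in (0 : ℝ)..T, (g' t) ^ 2) ≤ R - ε →
      ∃ N : ℕ, ∀ n : ℕ, N ≤ n → 1 ≤ n →
        Real.sqrt (discNormSq T n (steklovAvg T n g)) ≤ R) := by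
  constructor
  · exact fun n hn => steklov_bound T hT g g' hint hac hL2 n hn
  · intro ε R hε hεR hle
    set A := (∫ t in (0:ℝ)..T, (g t) ^ 2) + ∫ t in (0:ℝ)..T, (g' t) ^ 2 with hA
    have hAnn : 0 ≤ A := add_nonneg
      (intervalIntegral.integral_nonneg hT.le fun _ _ => sq_nonneg _)
      (intervalIntegral.integral_nonneg hT.le fun _ _ => sq_nonneg _)
    have hA_le : A ≤ (R - ε) ^ 2 := by
      calc A = Real.sqrt A ^ 2 := (Real.sq_sqrt hAnn).symm
      _ ≤ (R - ε) ^ 2 := by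
          apply pow_le_pow_left₀ (Real.sqrt_nonneg _) hle
    set δ := ε * (2 * R - ε) with hδ
    have hδpos : 0 < δ := by nlinarith
    have hq : IntegrableOn (fun t => g' t ^ 2) (Set.Icc (0:ℝ) T) := by
      rw [integrableOn_Icc_iff_integrableOn_Ioc]
      exact hL2.integrable_sq
    have hFc : ContinuousOn (fun x => ∫ s in (0:ℝ)..x, g' s ^ 2) (Set.Icc 0 T) := by
      have := intervalIntegral.continuousOn_primitive_interval
        (a := (0:ℝ)) (b := T) (f := fun t => g' t ^ 2) (μ := volume)
        (by rwa [Set.uIcc_of_le hT.le])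
      rwa [Set.uIcc_of_le hT.le] at this
    have h0mem : (0:ℝ) ∈ Set.Icc (0:ℝ) T := ⟨le_refl _, hT.le⟩
    have hcw : ContinuousWithinAt (fun x => ∫ s in (0:ℝ)..x, g' s ^ 2)
        (Set.Icc 0 T) 0 := hFc 0 h0mem
    have htend : Filter.Tendsto (fun n : ℕ => T / (n:ℝ)) Filter.atTop
        (nhdsWithin 0 (Set.Icc (0:ℝ) T)) := by
      rw [tendsto_nhdsWithin_iff]
      constructor
      · exact tendsto_const_div_atTop_nhds_zero_nat T
      · filter_upwards [Filter.eventually_ge_atTop 1] with m hm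
        have hm0 : (0:ℝ) < (m:ℝ) := by exact_mod_cast hm
        constructor
        · positivity
        · apply div_le_self hT.le
          exact_mod_cast hm
    have htend2 : Filter.Tendsto (fun m : ℕ => ∫ s in (0:ℝ)..(T / (m:ℝ)), g' s ^ 2)
        Filter.atTop (nhds (∫ s in (0:ℝ)..(0:ℝ), g' s ^ 2)) := by
      have := hcw.tendsto.comp htend
      exact this
    rw [intervalIntegral.integral_same] at htend2
    have hev : ∀ᶠ m : ℕ in Filter.atTop,
        (∫ s in (0:ℝ)..(T / (m:ℝ)), g' s ^ 2) < δ := htend2.eventually_lt_const hδpos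
    obtain ⟨N, hN⟩ := Filter.eventually_atTop.1 hev
    refine ⟨N, fun n hn hn1 => ?_⟩
    have h1 := steklov_bound T hT g g' hint hac hL2 n hn1
    have h2 : discNormSq T n (steklovAvg T n g) ≤ A + δ := by
      have h3 := hN n hn
      rw [← hA] at h1
      linarith [h1, h3]
    have h3 : A + δ ≤ R ^ 2 := by nlinarith [hA_le]
    calc Real.sqrt (discNormSq T n (steklovAvg T n g))
        ≤ Real.sqrt (R ^ 2) := Real.sqrt_le_sqrt (by linarith)
    _ = R := Real.sqrt_sq (by linarith)
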